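/- Let H be an n-vertex {2,3}-uniform linear hypergraph containing no Berge path of length 2. Then e(∂H) = n if and only if n is a multiple of 3 and H consists of n/3 pairwise disjoint hyperedges of size three covering all vertices. -/

import Mathlib

/-- A Berge path of length `k` in a hypergraph `H`: `k+1` distinct vertices
`v 0, …, v k` and `k` distinct hyperedges `h 0, …, h (k-1)` of `H` with
`{v i, v (i+1)} ⊆ h i` for all `i`. -/
def HasBergePath {V : Type*} (H : Finset (Finset V)) (k : ℕ) : Prop :=
  ∃ (v : Fin (k + 1) → V) (h : Fin k → Finset V),
    Function.Injective v ∧ Function.Injective h ∧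
    ∀ i : Fin k, h i ∈ H ∧ v i.castSucc ∈ h i ∧ v i.succ ∈ h i

/-- A hypergraph is linear if any two distinct hyperedges share at most one vertex. -/
def IsLinear {V : Type*} [DecidableEq V] (H : Finset (Finset V)) : Prop :=
  ∀ e₁ ∈ H, ∀ e₂ ∈ H, e₁ ≠ e₂ → (e₁ ∩ e₂).card ≤ 1

/-- The number of edges of the two-shadow `∂H` of a hypergraph `H`, i.e. the number
of `2`-element vertex sets contained in some hyperedge of `H`. -/
def shadowEdgeCount {V : Type*} [DecidableEq V] (H : Finset (Finset V)) : ℕ :=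
  (H.biUnion fun e => e.powersetCard 2).card

/-- For an `n`-vertex `{2,3}`-uniform linear hypergraph with no Berge path of length
`2`, the two-shadow has exactly `n` edges iff `3 ∣ n` and `H` consists of `n/3`
pairwise disjoint hyperedges of size three covering all vertices. -/
theorem shadow_no_path_two_equality {V : Type*} [Fintype V] [DecidableEq V]
    (H : Finset (Finset V))
    (hunif : ∀ e ∈ H, e.card = 2 ∨ e.card = 3)
    (hlin : IsLinear H)
    (hforb : ¬ HasBergePath H 2) :
    shadowEdgeCount H = Fintype.card V ↔
      3 ∣ Fintype.card V ∧
      H.card = Fintype.card V / 3 ∧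
      (∀ e ∈ H, e.card = 3) ∧
      (∀ e₁ ∈ H, ∀ e₂ ∈ H, e₁ ≠ e₂ → Disjoint e₁ e₂) ∧
      (∀ x : V, ∃ e ∈ H, x ∈ e) := by
  -- Step 1: the hyperedges are pairwise disjoint.
  have hdisj : ∀ e₁ ∈ H, ∀ e₂ ∈ H, e₁ ≠ e₂ → Disjoint e₁ e₂ := by
    intro e₁ h₁ e₂ h₂ hne
    rw [Finset.disjoint_left]
    intro x hx1 hx2
    have hc1 : 2 ≤ e₁.card := by rcases hunif e₁ h₁ with h | h <;> omega
    have hc2 : 2 ≤ e₂.card := by rcases hunif e₂ h₂ with h | h <;> omega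
    obtain ⟨y, hy, hyx⟩ : ∃ y ∈ e₁, y ≠ x := by
      by_contra hcon
      push_neg at hcon
      have hsub : e₁ ⊆ {x} := fun z hz => Finset.mem_singleton.2 (hcon z hz)
      have := Finset.card_le_card hsub
      simp only [Finset.card_singleton] at this
      omega
    obtain ⟨z, hz, hzx⟩ : ∃ z ∈ e₂, z ≠ x := by
      by_contra hcon
      push_neg at hcon
      have hsub : e₂ ⊆ {x} := fun w hw => Finset.mem_singleton.2 (hcon w hw)
      have := Finset.card_le_card hsub
      simp only [Finset.card_singleton] at this
      omega
    have hyz : y ≠ z := by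
      intro h
      subst h
      have hle := hlin e₁ h₁ e₂ h₂ hne
      have hsub : ({x, y} : Finset V) ⊆ e₁ ∩ e₂ := by
        intro w hw
        rcases Finset.mem_insert.1 hw with h' | h'
        · subst h'; exact Finset.mem_inter.2 ⟨hx1, hx2⟩
        · rw [Finset.mem_singleton] at h'; subst h'
          exact Finset.mem_inter.2 ⟨hy, hz⟩
      have hcc := Finset.card_le_card hsub
      rw [Finset.card_insert_of_notMem (by simp [Ne.symm hyx]),
        Finset.card_singleton] at hcc
      omega
    exact hforb ⟨![y, x, z], ![e₁, e₂],
      by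
        intro i j hij
        fin_cases i <;> fin_cases j <;> simp_all,
      by
        intro i j hij
        fin_cases i <;> fin_cases j <;> simp_all,
      by
        intro i
        fin_cases i
        · exact ⟨h₁, by simpa using hy, by simpa using hx1⟩
        · exact ⟨h₂, by simpa using hx2, by simpa using hz⟩⟩
  -- Step 2: shadow count is the sum of binomial coefficients.
  have hshadow : shadowEdgeCount H = ∑ e ∈ H, (e.card.choose 2) := by
    unfold shadowEdgeCount
    rw [Finset.card_biUnion]
    · exact Finset.sum_congr rfl fun e _ => Finset.card_powersetCard 2 e
    · intro e₁ h₁ e₂ h₂ hne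
      rw [Function.onFun, Finset.disjoint_left]
      intro p hp1 hp2
      rw [Finset.mem_powersetCard] at hp1 hp2
      obtain ⟨w, hw⟩ : p.Nonempty := by
        rw [← Finset.card_pos]; omega
      exact (Finset.disjoint_left.1 (hdisj e₁ h₁ e₂ h₂ hne) (hp1.1 hw)) (hp2.1 hw)
  -- Step 3: cardinality of the union of the hyperedges.
  have hunion : (H.biUnion id).card = ∑ e ∈ H, e.card := by
    exact Finset.card_biUnion hdisj
  have hunionle : (H.biUnion id).card ≤ Fintype.card V := by
    simpa using Finset.card_le_card (Finset.subset_univ (H.biUnion id))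
  constructor
  · intro hsum
    rw [hshadow] at hsum
    have hterm : ∀ e ∈ H, e.card.choose 2 ≤ e.card := by
      intro e he
      rcases hunif e he with h | h <;> rw [h] <;> decide
    have hsumle : ∑ e ∈ H, e.card.choose 2 ≤ ∑ e ∈ H, e.card :=
      Finset.sum_le_sum hterm
    have hall3 : ∀ e ∈ H, e.card = 3 := by
      intro e he
      by_contra hcon
      have he2 : e.card = 2 := by rcases hunif e he with h | h <;> omega
      have hlt : ∑ e ∈ H, e.card.choose 2 < ∑ e ∈ H, e.card := by
        apply Finset.sum_lt_sum hterm
        exact ⟨e, he, by rw [he2]; decide⟩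
      omega
    have hsum3 : ∑ e ∈ H, e.card = 3 * H.card := by
      rw [Finset.sum_congr rfl hall3, Finset.sum_const, smul_eq_mul, mul_comm]
    have hchoose3 : ∑ e ∈ H, e.card.choose 2 = 3 * H.card := by
      rw [Finset.sum_congr rfl fun e he => by rw [hall3 e he], Finset.sum_const,
        smul_eq_mul, mul_comm]
      norm_num
    have hn : Fintype.card V = 3 * H.card := by omega
    have huniv : H.biUnion id = Finset.univ := by
      apply Finset.eq_univ_of_card
      omega
    refine ⟨⟨H.card, hn⟩, by omega, hall3, hdisj, ?_⟩
    intro x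
    have hx : x ∈ H.biUnion id := by rw [huniv]; exact Finset.mem_univ x
    obtain ⟨e, he, hxe⟩ := Finset.mem_biUnion.1 hx
    exact ⟨e, he, hxe⟩
  · rintro ⟨h3, hcard, hall3, -, -⟩
    rw [hshadow]
    have : ∑ e ∈ H, e.card.choose 2 = 3 * H.card := by
      rw [Finset.sum_congr rfl fun e he => by rw [hall3 e he], Finset.sum_const,
        smul_eq_mul, mul_comm]
      norm_num
    rw [this, hcard]
    exact Nat.mul_div_cancel' h3
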